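/- Let n, m be natural numbers, let p₁, p₂, p₃, p₄, p₅, f₀ ∈ ℝⁿ, and let N be a real n×m matrix. For each component j define Δ_j = ½·det [[p₁ⱼ, −p₃ⱼ, p₄ⱼ], [−p₃ⱼ, p₂ⱼ, −p₅ⱼ], [p₄ⱼ, −p₅ⱼ, 2f₀ⱼ]] and ĥ_j = p₁ⱼ·p₂ⱼ − p₃ⱼ². If Δ_j = 0 and ĥ_j ≤ 0 for every j, then there exist complex vectors b, c, e, f̃, v, w ∈ ℂⁿ such that for all d_ε ∈ ℝⁿ and d_h ∈ ℝᵐ, writing u = N·d_h, the identity ½p₁⊙d_ε^{⊙2} − p₃⊙d_ε⊙u + ½p₂⊙u^{⊙2} + p₄⊙d_ε − p₅⊙u + f₀ = (b⊙d_ε + c⊙u + v) ⊙ (e⊙d_ε + f̃⊙u + w) holds in ℂⁿ (real vectors being coerced into ℂⁿ). -/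
import Mathlib

private lemma key1 (A B C D E F : ℂ) (hA : A ≠ 0)
    (hdet : 2*A*C*F - A*E^2 - 2*B^2*F + 2*B*D*E - C*D^2 = 0) :
    ∃ b c e f v w : ℂ, ∀ x y : ℂ,
      1/2*A*x^2 + B*x*y + 1/2*C*y^2 + D*x + E*y + F
        = (b*x + c*y + v) * (e*x + f*y + w) := by
  obtain ⟨s, hs⟩ := IsAlgClosed.exists_pow_nat_eq (k := ℂ) (B^2 - A*C) two_pos
  obtain ⟨r, hG, hr⟩ : ∃ r : ℂ, A*E - B*D = s*r ∧ r^2 = D^2 - 2*A*F := by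
    by_cases hs0 : s = 0
    · obtain ⟨r, hr⟩ := IsAlgClosed.exists_pow_nat_eq (k := ℂ) (D^2 - 2*A*F) two_pos
      refine ⟨r, ?_, hr⟩
      have hG2 : A * (A*E - B*D)^2 = 0 := by
        subst hs0
        linear_combination (-A^2)*hdet + (A*(2*A*F - D^2))*hs
      have := mul_left_cancel₀ hA (by rw [hG2]; ring : A * (A*E - B*D)^2 = A * 0)
      rw [hs0, zero_mul]
      exact pow_eq_zero_iff two_ne_zero |>.mp this
    · refine ⟨(A*E - B*D)/s, by field_simp, ?_⟩
      have hG2 : (A*E - B*D)^2 = s^2 * (D^2 - 2*A*F) := by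
        linear_combination (-A)*hdet + (2*A*F - D^2)*hs
      field_simp
      linear_combination hG2
  refine ⟨(2*A)⁻¹*A, (2*A)⁻¹*(B+s), A, B-s, (2*A)⁻¹*(D-r), D+r, fun x y => ?_⟩
  have h2 : 2*A*(1/2*A*x^2 + B*x*y + 1/2*C*y^2 + D*x + E*y + F)
      = (A*x + (B+s)*y + (D-r)) * (A*x + (B-s)*y + (D+r)) := by
    linear_combination y^2*hs + 2*y*hG + hr
  calc 1/2*A*x^2 + B*x*y + 1/2*C*y^2 + D*x + E*y + F
      = (2*A)⁻¹ * (2*A*(1/2*A*x^2 + B*x*y + 1/2*C*y^2 + D*x + E*y + F)) := by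
        field_simp
    _ = (2*A)⁻¹ * ((A*x + (B+s)*y + (D-r)) * (A*x + (B-s)*y + (D+r))) := by rw [h2]
    _ = ((2*A)⁻¹*A*x + (2*A)⁻¹*(B+s)*y + (2*A)⁻¹*(D-r)) * (A*x + (B-s)*y + (D+r)) := by
        ring

private lemma key (A B C D E F : ℂ)
    (hdet : 2*A*C*F - A*E^2 - 2*B^2*F + 2*B*D*E - C*D^2 = 0) :
    ∃ b c e f v w : ℂ, ∀ x y : ℂ,
      1/2*A*x^2 + B*x*y + 1/2*C*y^2 + D*x + E*y + F
        = (b*x + c*y + v) * (e*x + f*y + w) := by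
  by_cases hA : A = 0
  · by_cases hC : C = 0
    · by_cases hB : B = 0
      · exact ⟨D, E, 0, 0, F, 1, fun x y => by rw [hA, hB, hC]; ring⟩
      · have hBF : B*F = D*E := by
          apply mul_left_cancel₀ hB
          linear_combination (-(1/2))*hdet + (C*F - (1/2)*E^2)*(by rw [hA] : A = 0)
            + (-(1/2)*D^2)*(by rw [hC] : C = 0)
        refine ⟨B, 0, 0, 1, E, D/B, fun x y => ?_⟩
        field_simp
        linear_combination (B*x^2)*(by rw [hA] : A = 0)
          + (B*y^2)*(by rw [hC] : C = 0) + 2*hBF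
    · obtain ⟨b, c, e, f, v, w, h⟩ := key1 C B A E D F hC (by linear_combination hdet)
      exact ⟨c, b, f, e, v, w, fun x y => by linear_combination h y x⟩
  · exact key1 A B C D E F hA hdet

/-- if the degenerate-conic conditions `Δⱼ = 0` and `ĥⱼ ≤ 0` hold
componentwise, the quadratic vector expression of the Tensor Equation factorizes into
two linear factors connected via the Hadamard product (over ℂ). -/
theorem tensor_equation_hadamard_factorization
    {n m : ℕ} (p₁ p₂ p₃ p₄ p₅ f₀ : Fin n → ℝ) (N : Matrix (Fin n) (Fin m) ℝ)
    (hΔ : ∀ j, (1 / 2 : ℝ) * Matrix.det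
        !![p₁ j, -p₃ j, p₄ j; -p₃ j, p₂ j, -p₅ j; p₄ j, -p₅ j, 2 * f₀ j] = 0)
    (hhat : ∀ j, p₁ j * p₂ j - (p₃ j) ^ 2 ≤ 0) :
    ∃ b c e ft v w : Fin n → ℂ,
      ∀ (dε : Fin n → ℝ) (dh : Fin m → ℝ), ∀ j : Fin n,
        ((1 / 2 : ℂ) * (p₁ j : ℂ) * (dε j : ℂ) ^ 2
            - (p₃ j : ℂ) * (dε j : ℂ) * ((N.mulVec dh) j : ℂ)
            + (1 / 2 : ℂ) * (p₂ j : ℂ) * ((N.mulVec dh) j : ℂ) ^ 2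
            + (p₄ j : ℂ) * (dε j : ℂ)
            - (p₅ j : ℂ) * ((N.mulVec dh) j : ℂ)
            + (f₀ j : ℂ))
          = (b j * (dε j : ℂ) + c j * ((N.mulVec dh) j : ℂ) + v j)
            * (e j * (dε j : ℂ) + ft j * ((N.mulVec dh) j : ℂ) + w j) := by
  have hkey : ∀ j : Fin n, ∃ b c e f v w : ℂ, ∀ x y : ℂ,
      1/2*(p₁ j : ℂ)*x^2 + (-(p₃ j) : ℂ)*x*y + 1/2*(p₂ j : ℂ)*y^2
        + (p₄ j : ℂ)*x + (-(p₅ j) : ℂ)*y + (f₀ j : ℂ)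
        = (b*x + c*y + v) * (e*x + f*y + w) := by
    intro j
    apply key
    have h := hΔ j
    simp [Matrix.det_fin_three] at h
    have hr : 2*(p₁ j)*(p₂ j)*(f₀ j) - (p₁ j)*(p₅ j)^2 - 2*(p₃ j)^2*(f₀ j)
        + 2*(p₃ j)*(p₄ j)*(p₅ j) - (p₂ j)*(p₄ j)^2 = 0 := by linear_combination h
    have hc : ((2*(p₁ j)*(p₂ j)*(f₀ j) - (p₁ j)*(p₅ j)^2 - 2*(p₃ j)^2*(f₀ j)
        + 2*(p₃ j)*(p₄ j)*(p₅ j) - (p₂ j)*(p₄ j)^2 : ℝ) : ℂ) = 0 := by exact_mod_cast hr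
    push_cast at hc
    linear_combination hc
  choose b c e f v w hf using hkey
  refine ⟨b, c, e, f, v, w, fun dε dh j => ?_⟩
  linear_combination hf j (dε j : ℂ) ((N.mulVec dh) j : ℂ)
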